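/- Let δ > 0 and let ξ ∈ H be a unit vector such that ‖π(v)ξ − ε(v)ξ‖ ≤ δ for every unitary element v of A (i.e. every v ∈ A with v*v = vv* = 1). Then there exists a vector η ∈ H with ‖ξ − η‖ ≤ δ and π(a)η = ε(a)η for all a ∈ A. -/

import Mathlib

set_option maxHeartbeats 1000000


lemma exists_unitary_decomp
    {A : Type*} [NormedRing A] [StarRing A] [CStarRing A] [NormedAlgebra ℂ A]
    [CompleteSpace A] [StarModule ℂ A]
    {a : A} (ha : IsSelfAdjoint a) (h1 : ‖a‖ ≤ 1) :
    ∃ u : A, star u * u = 1 ∧ u * star u = 1 ∧ u + star u = (2 : ℂ) • a := by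
  rcases subsingleton_or_nontrivial A with hA | hA
  · exact ⟨1, Subsingleton.elim _ _, Subsingleton.elim _ _, Subsingleton.elim _ _⟩
  letI : CStarAlgebra A := { }
  have hna : IsStarNormal a := ha.isStarNormal
  set f : ℂ → ℂ := fun z => (z.re : ℂ) + (Real.sqrt (1 - z.re ^ 2) : ℝ) * Complex.I with hf
  have hfc : Continuous f := by
    apply Continuous.add
    · exact Complex.continuous_ofReal.comp Complex.continuous_re
    · exact ((Complex.continuous_ofReal.comp ((Real.continuous_sqrt).comp
        (by continuity))).mul continuous_const)
  have hsp : ∀ z ∈ spectrum ℂ a, z = (z.re : ℂ) ∧ z.re ^ 2 ≤ 1 := by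
    intro z hz
    refine ⟨ha.mem_spectrum_eq_re hz, ?_⟩
    have h2 := spectrum.norm_le_norm_of_mem hz
    have hz1 : ‖z‖ ≤ 1 := h2.trans h1
    have h3 : |z.re| ≤ 1 := (Complex.abs_re_le_norm z).trans hz1
    nlinarith [abs_nonneg z.re, sq_abs z.re]
  have hstarf : ∀ x : ℂ, star (f x) =
      (x.re : ℂ) - (Real.sqrt (1 - x.re ^ 2) : ℝ) * Complex.I := by
    intro x
    rw [hf]
    simp only [star_add, star_mul', Complex.star_def, Complex.conj_ofReal, Complex.conj_I]
    ring
  have hu : cfc f a ∈ unitary A := by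
    rw [cfc_unitary_iff f a hna hfc.continuousOn]
    intro x hx
    obtain ⟨hxre, hx1⟩ := hsp x hx
    have hs : Real.sqrt (1 - x.re ^ 2) ^ 2 = 1 - x.re ^ 2 := Real.sq_sqrt (by linarith)
    rw [hstarf x, hf]
    have expand : ((x.re : ℂ) - (Real.sqrt (1 - x.re ^ 2) : ℝ) * Complex.I) *
        ((x.re : ℂ) + (Real.sqrt (1 - x.re ^ 2) : ℝ) * Complex.I)
        = (x.re : ℂ)^2 + ((Real.sqrt (1 - x.re ^ 2) : ℝ) : ℂ)^2 := by
      ring_nf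
      rw [Complex.I_sq]
      ring
    rw [expand, ← Complex.ofReal_pow, ← Complex.ofReal_pow, hs, ← Complex.ofReal_add]
    push_cast
    ring
  refine ⟨cfc f a, (Unitary.mem_iff.mp hu).1, (Unitary.mem_iff.mp hu).2, ?_⟩
  rw [← cfc_star f a, ← cfc_add a f _ hfc.continuousOn (hfc.star.continuousOn)]
  have : cfc (fun z => f z + star (f z)) a = cfc (fun z : ℂ => (2:ℂ) * z) a := by
    apply cfc_congr
    intro x hx
    obtain ⟨hxre, -⟩ := hsp x hx
    simp only []
    rw [hstarf x, hf]
    conv_rhs => rw [hxre]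
    ring
  rw [this, cfc_const_mul (2:ℂ) (fun z => z) a, cfc_id' ℂ a]

theorem invariant_vector_near_unitary_almost_invariant
    {A : Type*} [NormedRing A] [StarRing A] [CStarRing A] [NormedAlgebra ℂ A]
    [CompleteSpace A] [StarModule ℂ A]
    {H : Type*} [NormedAddCommGroup H] [InnerProductSpace ℂ H] [CompleteSpace H]
    (π : A →⋆ₐ[ℂ] (H →L[ℂ] H)) (ε : A →⋆ₐ[ℂ] ℂ)
    (δ : ℝ) (hδ : 0 < δ) (ξ : H) (hξ : ‖ξ‖ = 1)
    (hinv : ∀ v : A, star v * v = 1 → v * star v = 1 → ‖π v ξ - ε v • ξ‖ ≤ δ) :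
    ∃ η : H, ‖ξ - η‖ ≤ δ ∧ ∀ a : A, π a η = ε a • η := by
  classical
  letI : InnerProductSpace ℝ H := InnerProductSpace.complexToReal
  -- unimodularity of ε on unitaries
  have hεmod : ∀ v : A, star v * v = 1 → (starRingEnd ℂ) (ε v) * ε v = 1 := by
    intro v hv
    have : (starRingEnd ℂ) (ε v) * ε v = ε (star v * v) := by
      rw [map_mul, map_star]; rfl
    rw [this, hv, map_one]
  have hεnorm : ∀ v : A, star v * v = 1 → ‖ε v‖ = 1 := by
    intro v hv
    have h1 := congrArg norm (hεmod v hv)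
    rw [norm_mul, norm_one, RCLike.norm_conj] at h1
    nlinarith [norm_nonneg (ε v)]
  -- π of unitaries is isometric
  have hπiso : ∀ v : A, star v * v = 1 → ∀ x : H, ‖π v x‖ = ‖x‖ := by
    intro v hv x
    have h2 : (ContinuousLinearMap.adjoint (π v)) ((π v) x) = x := by
      rw [← ContinuousLinearMap.star_eq_adjoint, ← map_star π, ← ContinuousLinearMap.mul_apply,
        ← map_mul, hv, map_one, ContinuousLinearMap.one_apply]
    have h1 : (inner ℂ ((π v) x) ((π v) x) : ℂ) = (inner ℂ x x : ℂ) := by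
      rw [← ContinuousLinearMap.adjoint_inner_right, h2]
    rw [norm_eq_sqrt_re_inner (𝕜 := ℂ) ((π v) x), norm_eq_sqrt_re_inner (𝕜 := ℂ) x, h1]
  -- the orbit set
  set O : Set H := {x | ∃ v : A, star v * v = 1 ∧ v * star v = 1 ∧
    x = (starRingEnd ℂ) (ε v) • π v ξ} with hO
  have hξO : ξ ∈ O := by
    refine ⟨1, by simp, by simp, ?_⟩
    simp [map_one]
  have hOball : O ⊆ Metric.closedBall ξ δ := by
    rintro x ⟨v, hv1, hv2, rfl⟩
    rw [Metric.mem_closedBall, dist_eq_norm]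
    have key : (ε v) • ((starRingEnd ℂ) (ε v) • π v ξ - ξ) = π v ξ - ε v • ξ := by
      rw [smul_sub, smul_smul, mul_comm, hεmod v hv1, one_smul]
    have h4 : ‖(starRingEnd ℂ) (ε v) • π v ξ - ξ‖ = ‖π v ξ - ε v • ξ‖ := by
      rw [← key, norm_smul, hεnorm v hv1, one_mul]
    rw [h4]
    exact hinv v hv1 hv2
  set C : Set H := closure (convexHull ℝ O) with hC
  have hCconv : Convex ℝ C := (convex_convexHull ℝ O).closure
  have hCne : C.Nonempty := ⟨ξ, subset_closure (subset_convexHull ℝ O hξO)⟩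
  have hCball : C ⊆ Metric.closedBall ξ δ :=
    closure_minimal (convexHull_min hOball (convex_closedBall ξ δ)) Metric.isClosed_closedBall
  obtain ⟨η, hηC, hηmin⟩ :=
    exists_norm_eq_iInf_of_complete_convex hCne (isClosed_closure.isComplete) hCconv 0
  have hd_le : ∀ w ∈ C, ‖η‖ ≤ ‖w‖ := by
    intro w hw
    have h5 : (⨅ w : C, ‖(0:H) - w‖) ≤ ‖(0:H) - w‖ := by
      apply ciInf_le ⟨0, Set.forall_mem_range.2 fun _ => norm_nonneg _⟩ (⟨w, hw⟩ : C)
    calc ‖η‖ = ‖(0:H) - η‖ := by rw [zero_sub, norm_neg]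
    _ ≤ ‖(0:H) - w‖ := hηmin ▸ h5
    _ = ‖w‖ := by rw [zero_sub, norm_neg]
  have huniq : ∀ x ∈ C, ‖x‖ = ‖η‖ → x = η := by
    intro x hx hnorm
    have hmid : (1/2 : ℝ) • x + (1/2 : ℝ) • η ∈ C :=
      hCconv hx hηC (by norm_num) (by norm_num) (by norm_num)
    have h1 : ‖η‖ ≤ ‖(1/2:ℝ) • x + (1/2:ℝ) • η‖ := hd_le _ hmid
    have hpar := parallelogram_law_with_norm ℂ x η
    have h2 : ‖x + η‖ = 2 * ‖(1/2:ℝ)•x + (1/2:ℝ)•η‖ := by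
      rw [← smul_add, norm_smul]
      simp
    have h2' : 2 * ‖η‖ ≤ ‖x + η‖ := by rw [h2]; linarith
    rw [hnorm] at hpar
    have h3 : ‖x - η‖ * ‖x - η‖ ≤ 0 := by
      nlinarith [mul_le_mul h2' h2' (by positivity) (norm_nonneg (x + η))]
    have h4 : x - η = 0 :=
      norm_eq_zero.mp (le_antisymm (by nlinarith [norm_nonneg (x - η)]) (norm_nonneg _))
    exact sub_eq_zero.mp h4
  -- invariance under unitaries
  have hunit : ∀ v : A, star v * v = 1 → v * star v = 1 → π v η = ε v • η := by
    intro v hv1 hv2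
    set T : H →L[ℂ] H := (starRingEnd ℂ) (ε v) • (π v) with hT
    have hTlin : IsLinearMap ℝ T := ⟨T.map_add, fun c x => T.map_smul_of_tower c x⟩
    have hTnorm : ∀ x, ‖T x‖ = ‖x‖ := by
      intro x
      rw [hT]
      simp only [ContinuousLinearMap.smul_apply]
      rw [norm_smul, RCLike.norm_conj, hεnorm v hv1, one_mul, hπiso v hv1 x]
    have hTO : T '' O ⊆ O := by
      rintro _ ⟨_, ⟨w, hw1, hw2, rfl⟩, rfl⟩
      refine ⟨v * w, ?_, ?_, ?_⟩
      · rw [star_mul, mul_assoc, ← mul_assoc (star v), hv1, one_mul, hw1]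
      · rw [star_mul, mul_assoc, ← mul_assoc w, hw2, one_mul, hv2]
      · rw [hT]
        simp only [ContinuousLinearMap.smul_apply, map_smul, map_mul,
          ContinuousLinearMap.mul_apply, smul_smul]
        rw [mul_comm]
    have hTC : T '' C ⊆ C := by
      have step1 : T '' C ⊆ closure (T '' convexHull ℝ O) :=
        image_closure_subset_closure_image T.continuous
      have step2 : T '' convexHull ℝ O = convexHull ℝ (T '' O) :=
        hTlin.image_convexHull O
      refine step1.trans ?_
      rw [step2]
      exact closure_mono (convexHull_mono hTO)
    have hTη : T η = η := huniq (T η) (hTC ⟨η, hηC, rfl⟩) (hTnorm η)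
    have : (ε v) • (T η) = (ε v) • η := congrArg _ hTη
    rw [hT] at this
    simp only [ContinuousLinearMap.smul_apply, smul_smul,
      mul_comm (ε v) ((starRingEnd ℂ) (ε v)), hεmod v hv1, one_smul] at this
    exact this
  -- extension to self-adjoints
  have hsa : ∀ a : A, IsSelfAdjoint a → π a η = ε a • η := by
    intro a ha
    rcases eq_or_ne a 0 with rfl | h0
    · simp
    have hr : (0:ℝ) < ‖a‖ := norm_pos_iff.mpr h0
    set b : A := ((‖a‖ : ℂ))⁻¹ • a with hb
    have hb_sa : IsSelfAdjoint b := by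
      rw [hb, IsSelfAdjoint, star_smul, ha.star_eq, star_inv₀, Complex.star_def,
        Complex.conj_ofReal]
    have hbnorm : ‖b‖ ≤ 1 := by
      rw [hb, norm_smul, norm_inv, Complex.norm_real, Real.norm_eq_abs, abs_of_pos hr,
        inv_mul_cancel₀ hr.ne']
    obtain ⟨u, hu1, hu2, hsum⟩ := exists_unitary_decomp hb_sa hbnorm
    have h_u := hunit u hu1 hu2
    have h_us := hunit (star u) (by rwa [star_star]) (by rwa [star_star])
    have h2b : π ((2:ℂ) • b) η = ε ((2:ℂ) • b) • η := by
      rw [← hsum, map_add, map_add, ContinuousLinearMap.add_apply, h_u, h_us, ← add_smul]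
    rw [map_smul π (2:ℂ) b, map_smul ε (2:ℂ) b, ContinuousLinearMap.smul_apply, smul_eq_mul, mul_smul] at h2b
    have hbη : π b η = ε b • η := smul_right_injective H two_ne_zero h2b
    have ha_eq : a = (‖a‖ : ℂ) • b := by
      rw [hb, smul_smul, mul_inv_cancel₀ (by exact_mod_cast hr.ne'), one_smul]
    rw [ha_eq, map_smul π ((‖a‖:ℂ)) b, map_smul ε ((‖a‖:ℂ)) b, ContinuousLinearMap.smul_apply, hbη, smul_eq_mul, mul_smul]
  -- extension to everything
  refine ⟨η, ?_, ?_⟩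
  · have := hCball hηC
    rw [Metric.mem_closedBall, dist_comm, dist_eq_norm] at this
    exact this
  · intro a
    set h : A := (1/2 : ℂ) • (a + star a) with hh
    set k : A := (-(Complex.I)/2) • (a - star a) with hk
    have hh_sa : IsSelfAdjoint h := by
      rw [hh, IsSelfAdjoint, star_smul, star_add, star_star]
      congr 1
      · simp
      · rw [add_comm]
    have hk_sa : IsSelfAdjoint k := by
      rw [hk, IsSelfAdjoint, star_smul, star_sub, star_star]
      rw [show star (-(Complex.I)/2) = Complex.I/2 by simp]
      rw [show star a - a = -(a - star a) by abel]
      rw [smul_neg, ← neg_smul, neg_div]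
    have hdecomp : a = h + Complex.I • k := by
      rw [hh, hk, smul_smul]
      rw [show Complex.I * (-(Complex.I)/2) = 1/2 by
        rw [mul_comm, div_mul_eq_mul_div, neg_mul, Complex.I_mul_I, neg_neg]]
      rw [← smul_add]
      rw [show a + star a + (a - star a) = (2:ℂ) • a by
        rw [two_smul]; abel]
      rw [smul_smul]
      norm_num
    rw [hdecomp, map_add, map_add, ContinuousLinearMap.add_apply, hsa h hh_sa,
      map_smul, map_smul, ContinuousLinearMap.smul_apply, hsa k hk_sa, add_smul, smul_assoc]
    congr 1
    rw [map_smul ε Complex.I k, hk, map_smul, smul_eq_mul, smul_eq_mul, mul_smul, mul_smul, mul_smul]
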